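/- Let G = H ≀ S be the wreath product of a nontrivial finite group H with a permutation group S of degree n. If every abelian subgroup of H has order at most a (with a ≥ 2), then every abelian subgroup of G has order at most a^n. -/

import Mathlib

/-- The automorphism of `Fin n → H` induced by a permutation of coordinates. -/
def permCoordAut (H : Type*) [Group H] {n : ℕ} (σ : Equiv.Perm (Fin n)) :
    MulAut (Fin n → H) where
  toFun f := f ∘ σ.symm
  invFun f := f ∘ σ
  left_inv f := by funext x; simp
  right_inv f := by funext x; simp
  map_mul' f g := rfl

/-- The action of a permutation group `S ≤ Sym(n)` on `Fin n → H` by permuting coordinates,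
used to form the wreath product `H ≀ S` as a semidirect product. -/
def wreathAction (H : Type*) [Group H] {n : ℕ} (S : Subgroup (Equiv.Perm (Fin n))) :
    S →* MulAut (Fin n → H) :=
  MonoidHom.mk' (fun σ => permCoordAut H (σ : Equiv.Perm (Fin n)))
    (by intro a b; rfl)

private lemma aux_nat_card_sigma {ι : Type*} [Fintype ι] (f : ι → Type*) [∀ i, Finite (f i)] :
    Nat.card (Σ i, f i) = ∑ i, Nat.card (f i) := by
  letI : ∀ i, Fintype (f i) := fun i => Fintype.ofFinite _
  simp [Nat.card_eq_fintype_card, Fintype.card_sigma]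

private lemma aux_le_pow_pred {a m : ℕ} (ha : 2 ≤ a) (hm : 1 ≤ m) : m ≤ a ^ (m - 1) := by
  have h1 : m - 1 < 2 ^ (m - 1) := Nat.lt_two_pow_self
  have h2 : (2:ℕ) ^ (m-1) ≤ a ^ (m-1) := Nat.pow_le_pow_left ha _
  omega

/-- If every abelian subgroup of the nontrivial finite group `H` has order at most `a` (with
`a ≥ 2`), then every abelian subgroup of the wreath product `H ≀ S`, for `S` a permutation
group of degree `n`, has order at most `a^n`. -/
theorem abelian_subgroup_wreath_card_le
    (H : Type*) [Group H] [Finite H] [Nontrivial H]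
    (n : ℕ) (S : Subgroup (Equiv.Perm (Fin n)))
    (a : ℕ) (ha : 2 ≤ a)
    (hH : ∀ B : Subgroup H, (∀ x ∈ B, ∀ y ∈ B, x * y = y * x) → Nat.card B ≤ a)
    (A : Subgroup (SemidirectProduct (Fin n → H) S (wreathAction H S)))
    (hA : ∀ x ∈ A, ∀ y ∈ A, x * y = y * x) :
    Nat.card A ≤ a ^ n := by
  classical
  -- the projection from A to Perm (Fin n)
  let φ' : ↥A →* Equiv.Perm (Fin n) :=
    (S.subtype.comp SemidirectProduct.rightHom).comp A.subtype
  have hA' : ∀ x y : ↥A, x * y = y * x := fun x y =>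
    Subtype.ext (hA x.1 x.2 y.1 y.2)
  set T : Subgroup (Equiv.Perm (Fin n)) := φ'.range with hTdef
  have hT : ∀ u v : ↥T, u * v = v * u := by
    rintro ⟨_, g, rfl⟩ ⟨_, h, rfl⟩
    have : φ' g * φ' h = φ' h * φ' g := by
      rw [← map_mul, ← map_mul, hA' g h]
    exact Subtype.ext this
  -- orbits of T on Fin n
  let Q := MulAction.orbitRel.Quotient ↥T (Fin n)
  haveI : Fintype Q := Fintype.ofFinite _
  -- every point is in the orbit of the representative of its class
  have horb : ∀ i : Fin n, ∃ s : ↥T, s • ((⟦i⟧ : Q).out : Fin n) = i := by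
    intro i
    have h : (⟦(⟦i⟧ : Q).out⟧ : Q) = ⟦i⟧ := Quotient.out_eq _
    have h2 := Quotient.exact h
    exact @Setoid.symm _ (MulAction.orbitRel ↥T (Fin n)) _ _ h2
  -- an element of T fixing all representatives is trivial
  have key : ∀ u : ↥T, (∀ q : Q, u • (q.out : Fin n) = q.out) → u = 1 := by
    intro u hu
    have hfix : ∀ i : Fin n, u • i = i := by
      intro i
      obtain ⟨s, hs⟩ := horb i
      calc u • i = u • s • ((⟦i⟧ : Q).out : Fin n) := by rw [hs]
        _ = s • u • ((⟦i⟧ : Q).out : Fin n) := by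
            rw [smul_smul, smul_smul, hT u s]
        _ = s • ((⟦i⟧ : Q).out : Fin n) := by rw [hu]
        _ = i := hs
    refine Subtype.ext (Equiv.ext fun i => ?_)
    exact hfix i
  -- bound Nat.card T by the product of orbit sizes
  let nq : Q → ℕ := fun q => Nat.card (MulAction.orbit ↥T (q.out : Fin n))
  have hnq1 : ∀ q : Q, 1 ≤ nq q := by
    intro q
    have : Nonempty (MulAction.orbit ↥T (q.out : Fin n)) :=
      ⟨⟨_, MulAction.mem_orbit_self _⟩⟩
    exact Nat.one_le_iff_ne_zero.2 Nat.card_pos.ne'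
  have hTcard : Nat.card ↥T ≤ ∏ q : Q, nq q := by
    have hinj : Function.Injective (fun (u : ↥T) (q : Q) =>
        (⟨u • (q.out : Fin n), MulAction.mem_orbit _ _⟩ :
          MulAction.orbit ↥T (q.out : Fin n))) := by
      intro u v huv
      have h1 : ∀ q : Q, u • (q.out : Fin n) = v • (q.out : Fin n) := fun q =>
        congrArg Subtype.val (congrFun huv q)
      have h2 : v⁻¹ * u = 1 := by
        refine key _ fun q => ?_
        rw [mul_smul, h1 q, inv_smul_smul]
      have := congrArg (v * ·) h2
      simpa [mul_assoc] using this
    calc Nat.card ↥T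
        ≤ Nat.card (∀ q : Q, MulAction.orbit ↥T (q.out : Fin n)) :=
          Nat.card_le_card_of_injective _ hinj
      _ = ∏ q : Q, nq q := Nat.card_pi
  -- elements of the kernel have trivial right component
  have hker : ∀ x : ↥A, x ∈ φ'.ker → x.1.right = 1 := by
    intro x hx
    have h : S.subtype x.1.right = 1 := hx
    exact Subtype.ext h
  -- evaluation homomorphisms on the kernel
  let e : Q → (↥φ'.ker →* H) := fun q =>
    MonoidHom.mk' (fun x => x.1.1.left (q.out : Fin n)) (by
      intro x y
      have hx : x.1.1.right = 1 := hker x.1 x.2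
      show (x.1.1 * y.1.1).left (q.out : Fin n) = _
      rw [SemidirectProduct.mul_left, hx, map_one]
      rfl)
  have hrange : ∀ q : Q, Nat.card ↥(e q).range ≤ a := by
    intro q
    refine hH _ ?_
    rintro _ ⟨x, rfl⟩ _ ⟨y, rfl⟩
    rw [← map_mul, ← map_mul]
    congr 1
    exact Subtype.ext (hA' x.1 y.1)
  -- an element of the kernel vanishing at all representatives is trivial
  have key2 : ∀ z : ↥φ'.ker, (∀ q : Q, e q z = 1) → z = 1 := by
    intro z hz
    have hzr : z.1.1.right = 1 := hker z.1 z.2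
    have hleft : ∀ i : Fin n, z.1.1.left i = 1 := by
      intro i
      obtain ⟨s, hs⟩ := horb i
      obtain ⟨g, hg⟩ := s.2
      -- φ' g, as a permutation, sends the representative to i
      have hgi : (g.1.right : Equiv.Perm (Fin n)) ((⟦i⟧ : Q).out : Fin n) = i := by
        have : (s : Equiv.Perm (Fin n)) ((⟦i⟧ : Q).out : Fin n) = i := hs
        rw [← hg] at this
        exact this
      have hcomm : g.1 * z.1.1 = z.1.1 * g.1 := hA g.1 g.2 z.1.1 z.1.2
      have h1 := congrArg (fun w : (Fin n → H) ⋊[wreathAction H S] ↥S => w.left i) hcomm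
      simp only [SemidirectProduct.mul_left, hzr, map_one] at h1
      -- unfold the wreath action
      have h2 : (wreathAction H S g.1.right) z.1.1.left i
          = z.1.1.left ((g.1.right : Equiv.Perm (Fin n)).symm i) := rfl
      have h3 : ((g.1.right : Equiv.Perm (Fin n))).symm i = ((⟦i⟧ : Q).out : Fin n) :=
        (Equiv.symm_apply_eq _).2 hgi.symm
      have h4 : z.1.1.left ((⟦i⟧ : Q).out : Fin n) = 1 := hz ⟦i⟧
      rw [Pi.mul_apply, Pi.mul_apply, h2, h3, h4, mul_one] at h1
      -- h1 : g.left i = z.left i * g.left i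
      have := mul_right_cancel (a := z.1.1.left i) (b := g.1.left i) (c := 1) ?_
      · exact this
      · rw [one_mul]; exact h1.symm
    refine Subtype.ext (Subtype.ext (SemidirectProduct.ext ?_ hzr))
    funext i
    exact hleft i
  -- bound Nat.card of kernel
  have hKcard : Nat.card ↥φ'.ker ≤ a ^ Fintype.card Q := by
    have hinj : Function.Injective (fun (x : ↥φ'.ker) (q : Q) =>
        (⟨e q x, ⟨x, rfl⟩⟩ : ↥(e q).range)) := by
      intro x y hxy
      have h1 : ∀ q : Q, e q x = e q y := fun q =>
        congrArg Subtype.val (congrFun hxy q)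
      have h2 : y⁻¹ * x = 1 := by
        refine key2 _ fun q => ?_
        rw [map_mul, map_inv, h1 q, inv_mul_cancel]
      have := congrArg (y * ·) h2
      simpa [mul_assoc] using this
    calc Nat.card ↥φ'.ker
        ≤ Nat.card (∀ q : Q, ↥(e q).range) := Nat.card_le_card_of_injective _ hinj
      _ = ∏ q : Q, Nat.card ↥(e q).range := Nat.card_pi
      _ ≤ ∏ q : Q, a := Finset.prod_le_prod (fun _ _ => Nat.zero_le _)
          (fun q _ => hrange q)
      _ = a ^ Fintype.card Q := by
          rw [Finset.prod_const, Finset.card_univ]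
  -- the card decomposition
  have hcard : Nat.card ↥A = Nat.card ↥φ'.ker * Nat.card ↥T := by
    rw [Subgroup.card_eq_card_quotient_mul_card_subgroup φ'.ker,
      Nat.card_congr (QuotientGroup.quotientKerEquivRange φ').toEquiv, mul_comm]
  -- sum of orbit sizes is n
  have hsum : ∑ q : Q, nq q = n := by
    have h := Nat.card_congr (MulAction.selfEquivSigmaOrbits ↥T (Fin n))
    rw [aux_nat_card_sigma, Nat.card_eq_fintype_card, Fintype.card_fin] at h
    exact h.symm
  -- final arithmetic
  calc Nat.card ↥A = Nat.card ↥φ'.ker * Nat.card ↥T := hcard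
    _ ≤ (a ^ Fintype.card Q) * ∏ q : Q, nq q :=
        Nat.mul_le_mul hKcard hTcard
    _ = ∏ q : Q, (a * nq q) := by
        rw [Finset.prod_mul_distrib, Finset.prod_const, Finset.card_univ]
    _ ≤ ∏ q : Q, a ^ nq q := by
        refine Finset.prod_le_prod (fun _ _ => Nat.zero_le _) (fun q _ => ?_)
        calc a * nq q ≤ a * a ^ (nq q - 1) :=
              Nat.mul_le_mul_left a (aux_le_pow_pred ha (hnq1 q))
          _ = a ^ (1 + (nq q - 1)) := by rw [pow_add, pow_one]
          _ = a ^ nq q := by rw [Nat.add_sub_cancel' (hnq1 q)]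
    _ = a ^ (∑ q : Q, nq q) := Finset.prod_pow_eq_pow_sum _ _ _
    _ = a ^ n := by rw [hsum]
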